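/- For i.i.d. standard Gaussian weights w ∈ ℝ^n, the number T = |{x ∈ {0,1}^n : ⟨w, x⟩ > 0}| is uniformly distributed on {0, 1, ..., 2^n - 1}. -/

import Mathlib

open MeasureTheory ProbabilityTheory

/-- The indicator vector of `x : Fin n → Bool` as a real vector. -/
noncomputable def ind {n : ℕ} (x : Fin n → Bool) : Fin n → ℝ :=
  fun i => if x i then 1 else 0

/-- Number of hypercube vertices strictly above the hyperplane with normal `w`. -/
noncomputable def Tcount {n : ℕ} (w : Fin n → ℝ) : ℕ :=
  Nat.card {x : Fin n → Bool // 0 < ∑ i, w i * ind x i}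

noncomputable def sVal {n : ℕ} (w : Fin n → ℝ) (A : Fin n → Bool) : ℝ :=
  ∑ i, w i * ind A i

noncomputable def rank {n : ℕ} (w : Fin n → ℝ) (S : Fin n → Bool) : ℕ :=
  (Finset.univ.filter fun A => sVal w S < sVal w A).card

-- combinatorial core
lemma rank_injective {α : Type*} [Fintype α] {f : α → ℝ} (hf : Function.Injective f) :
    Function.Injective (fun a => (Finset.univ.filter fun b => f a < f b).card) := by
  have key : ∀ a a' : α, f a < f a' →
      (Finset.univ.filter fun b => f a' < f b).card < (Finset.univ.filter fun b => f a < f b).card := by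
    intro a a' h
    apply Finset.card_lt_card
    constructor
    · intro b hb
      simp only [Finset.mem_filter, Finset.mem_univ, true_and] at hb ⊢
      exact h.trans hb
    · intro hsub
      have : a' ∈ Finset.univ.filter fun b => f a < f b := by
        simp only [Finset.mem_filter, Finset.mem_univ, true_and]; exact h
      have := hsub this
      simp only [Finset.mem_filter, Finset.mem_univ, true_and] at this
      exact lt_irrefl _ this
  intro a a' h
  simp only at h
  by_contra hne
  rcases lt_or_gt_of_ne (fun hfa => hne (hf hfa)) with h1 | h1
  · exact absurd h (Nat.ne_of_gt (key a a' h1))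
  · exact absurd h (Nat.ne_of_gt (key a' a h1)).symm

lemma rank_lt {α : Type*} [Fintype α] (f : α → ℝ) (a : α) :
    (Finset.univ.filter fun b => f a < f b).card < Fintype.card α := by
  classical
  have : (Finset.univ.filter fun b => f a < f b) ⊆ Finset.univ.erase a := by
    intro b hb
    simp only [Finset.mem_filter, Finset.mem_univ, true_and] at hb
    refine Finset.mem_erase.2 ⟨?_, Finset.mem_univ _⟩
    rintro rfl; exact lt_irrefl _ hb
  calc (Finset.univ.filter fun b => f a < f b).card ≤ (Finset.univ.erase a).card :=
        Finset.card_le_card this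
    _ < Fintype.card α := by
        rw [Finset.card_erase_of_mem (Finset.mem_univ a), Finset.card_univ]
        exact Nat.sub_lt (Fintype.card_pos_iff.2 ⟨a⟩) one_pos

lemma exists_unique_rank {α : Type*} [Fintype α] [Nonempty α] {f : α → ℝ}
    (hf : Function.Injective f) {t : ℕ} (ht : t < Fintype.card α) :
    ∃! a : α, (Finset.univ.filter fun b => f a < f b).card = t := by
  classical
  set g : α → Fin (Fintype.card α) :=
    fun a => ⟨(Finset.univ.filter fun b => f a < f b).card, rank_lt f a⟩ with hg
  have hginj : Function.Injective g := by
    intro a a' h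
    exact rank_injective hf (by simpa [hg, Fin.ext_iff] using h)
  have hgbij : Function.Bijective g :=
    (Fintype.bijective_iff_injective_and_card g).2 ⟨hginj, by simp⟩
  obtain ⟨a, ha⟩ := hgbij.2 ⟨t, ht⟩
  refine ⟨a, by simpa [hg, Fin.ext_iff] using ha, fun a' ha' => hginj ?_⟩
  rw [ha]
  exact Fin.ext (by simpa [hg] using ha')

lemma natCard_subtype {n : ℕ} (p : (Fin n → Bool) → Prop) [DecidablePred p] :
    Nat.card {x : Fin n → Bool // p x} = (Finset.univ.filter p).card := by
  rw [Nat.card_eq_fintype_card, Fintype.card_subtype]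

noncomputable def flipv {n : ℕ} (S : Fin n → Bool) (w : Fin n → ℝ) : Fin n → ℝ :=
  fun i => if S i then -(w i) else w i

lemma sVal_bot {n : ℕ} (w : Fin n → ℝ) : sVal w (fun _ => false) = 0 := by
  simp [sVal, ind]

lemma Tcount_eq_rank_bot {n : ℕ} (w : Fin n → ℝ) :
    Tcount w = rank w (fun _ => false) := by
  classical
  rw [Tcount, rank]
  have : ∀ x : Fin n → Bool, (0 < ∑ i, w i * ind x i) ↔
      (sVal w (fun _ => false) < sVal w x) := by
    intro x; rw [sVal_bot]; rfl
  simp_rw [this]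
  exact natCard_subtype _

lemma flip_sum {n : ℕ} (S : Fin n → Bool) (w : Fin n → ℝ) (x : Fin n → Bool) :
    ∑ i, flipv S w i * ind x i = sVal w (fun i => xor (x i) (S i)) - sVal w S := by
  rw [sVal, sVal, ← Finset.sum_sub_distrib]
  apply Finset.sum_congr rfl
  intro i _
  simp only [flipv, ind]
  rcases Bool.eq_false_or_eq_true (S i) with hS | hS <;>
    rcases Bool.eq_false_or_eq_true (x i) with hx | hx <;> simp [hS, hx]

lemma Tcount_flip {n : ℕ} (S : Fin n → Bool) (w : Fin n → ℝ) :
    Tcount (flipv S w) = rank w S := by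
  classical
  rw [Tcount, rank]
  have h1 : ∀ x : Fin n → Bool, (0 < ∑ i, flipv S w i * ind x i) ↔
      sVal w S < sVal w (fun i => xor (x i) (S i)) := by
    intro x; rw [flip_sum, sub_pos]
  simp_rw [h1]
  have e : {x : Fin n → Bool // sVal w S < sVal w (fun i => xor (x i) (S i))} ≃
      {y : Fin n → Bool // sVal w S < sVal w y} := by
    refine Equiv.subtypeEquiv (Function.Involutive.toPerm (fun x i => xor (x i) (S i)) ?_) ?_
    · intro x; funext i; simp [Bool.xor_assoc]
    · intro x; rfl
  rw [Nat.card_congr e]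
  exact natCard_subtype _

instance : NullSingletonClass (gaussianReal 0 1) :=
  ⟨fun x => (gaussianReal_absolutelyContinuous 0 one_ne_zero) (measure_singleton x)⟩

lemma gaussian_neg : MeasurePreserving (fun x : ℝ => -x) (gaussianReal 0 1) (gaussianReal 0 1) := by
  refine ⟨measurable_neg, ?_⟩
  have h := gaussianReal_map_const_mul (μ := 0) (v := 1) (-1)
  have h2 : (fun x : ℝ => -x) = ((-1 : ℝ) * ·) := by funext x; ring
  rw [h2, h]
  norm_num

lemma flip_mp {n : ℕ} (S : Fin n → Bool) :
    MeasurePreserving (flipv S) (Measure.pi fun _ : Fin n => gaussianReal 0 1)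
      (Measure.pi fun _ : Fin n => gaussianReal 0 1) := by
  have h : flipv S = fun (w : Fin n → ℝ) i => (fun x : ℝ => if S i then -x else x) (w i) := rfl
  rw [h]
  refine measurePreserving_pi (f := fun (i : Fin n) (x : ℝ) => if S i then -x else x)
    (fun _ => gaussianReal 0 1) (fun _ => gaussianReal 0 1) (fun i => ?_)
  by_cases hi : S i
  · simp only [hi, if_true]; exact gaussian_neg
  · simp only [hi, if_false]; exact MeasurePreserving.id _

lemma measurable_sVal {n : ℕ} (A : Fin n → Bool) :
    Measurable fun w : Fin n → ℝ => sVal w A :=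
  Finset.measurable_sum _ (fun i _ => (measurable_pi_apply i).mul_const _)

lemma measurable_rank {n : ℕ} (S : Fin n → Bool) :
    Measurable fun w : Fin n → ℝ => rank w S := by
  classical
  have h : (fun w : Fin n → ℝ => rank w S)
      = fun w => ∑ A : Fin n → Bool, if sVal w S < sVal w A then 1 else 0 := by
    funext w; rw [rank, Finset.card_filter]
  rw [h]
  exact Finset.measurable_sum _ (fun A _ =>
    Measurable.ite (measurableSet_lt (measurable_sVal S) (measurable_sVal A))
      measurable_const measurable_const)

lemma null_pair {n : ℕ} {A B : Fin n → Bool} (hAB : A ≠ B) :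
    (Measure.pi fun _ : Fin n => gaussianReal 0 1) {w | sVal w A = sVal w B} = 0 := by
  classical
  obtain ⟨i₀, hi₀⟩ : ∃ i, A i ≠ B i := by
    by_contra h
    push_neg at h
    exact hAB (funext h)
  set c : Fin n → ℝ := fun i => ind A i - ind B i with hc
  have hc₀ : c i₀ ≠ 0 := by
    simp only [hc, ind]
    rcases Bool.eq_false_or_eq_true (A i₀) with h1 | h1 <;>
      rcases Bool.eq_false_or_eq_true (B i₀) with h2 | h2 <;>
        simp [h1, h2] at hi₀ ⊢
  have hset : {w : Fin n → ℝ | sVal w A = sVal w B} = {w | ∑ i, w i * c i = 0} := by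
    ext w
    simp only [Set.mem_setOf_eq, hc, sVal]
    rw [← sub_eq_zero, ← Finset.sum_sub_distrib]
    constructor <;> intro h <;> (convert h using 2 with i; ring)
  rw [hset]
  set p : Fin n → Prop := fun i => i ≠ i₀ with hp
  set e := MeasurableEquiv.piEquivPiSubtypeProd (fun _ : Fin n => ℝ) p with he
  have hmp := measurePreserving_piEquivPiSubtypeProd (fun _ : Fin n => gaussianReal 0 1) p
  have hSmeas : MeasurableSet {w : Fin n → ℝ | ∑ i, w i * c i = 0} := by
    have : Measurable fun w : Fin n → ℝ => ∑ i, w i * c i :=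
      Finset.measurable_sum _ (fun i _ => (measurable_pi_apply i).mul_const _)
    exact this (measurableSet_singleton 0)
  set B' := e.symm ⁻¹' {w : Fin n → ℝ | ∑ i, w i * c i = 0} with hB'
  have hB'meas : MeasurableSet B' := e.symm.measurable hSmeas
  have hpre : e ⁻¹' B' = {w : Fin n → ℝ | ∑ i, w i * c i = 0} := by
    rw [hB', ← Set.preimage_comp]
    simp
  have hμ : (Measure.pi fun _ : Fin n => gaussianReal 0 1)
      {w : Fin n → ℝ | ∑ i, w i * c i = 0}
      = ((Measure.pi fun _ : Subtype p => gaussianReal 0 1).prod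
          (Measure.pi fun _ : {i // ¬ p i} => gaussianReal 0 1)) B' := by
    rw [← hpre]
    exact hmp.measure_preimage hB'meas.nullMeasurableSet
  rw [hμ, Measure.measure_prod_null hB'meas]
  refine Filter.Eventually.of_forall (fun y => ?_)
  simp only [Pi.zero_apply]
  have hj₀ : ¬ p i₀ := by simp [hp]
  set j₀ : {i // ¬ p i} := ⟨i₀, hj₀⟩ with hj
  set K : ℝ := ∑ i ∈ Finset.univ.erase i₀,
    (if h : p i then y ⟨i, h⟩ * c i else 0) with hK
  have hslice : (Prod.mk y ⁻¹' B') = {x : {i // ¬ p i} → ℝ | x j₀ = -K / c i₀} := by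
    ext x
    simp only [hB', Set.mem_preimage, Set.mem_setOf_eq]
    have he2 : ∀ i, e.symm (y, x) i = if h : p i then y ⟨i, h⟩ else x ⟨i, h⟩ := by
      intro i
      rfl
    have hsum : ∑ i, e.symm (y, x) i * c i = K + x j₀ * c i₀ := by
      rw [← Finset.sum_erase_add _ _ (Finset.mem_univ i₀)]
      congr 1
      · rw [hK]
        refine Finset.sum_congr rfl (fun i hi => ?_)
        have hpi : p i := Finset.ne_of_mem_erase hi
        rw [he2, dif_pos hpi, dif_pos hpi]
      · rw [he2, dif_neg hj₀]
    rw [hsum]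
    rw [eq_div_iff hc₀]
    constructor
    · intro h; linarith
    · intro h; linarith
  show (Measure.pi fun _ : {i // ¬ p i} => gaussianReal 0 1) (Prod.mk y ⁻¹' B') = 0
  rw [hslice]
  have : {x : {i // ¬ p i} → ℝ | x j₀ = -K / c i₀}
      = (Function.eval j₀ : ({i // ¬ p i} → ℝ) → ℝ) ⁻¹' {-K / c i₀} := rfl
  rw [this]
  exact Measure.pi_eval_preimage_null _ (measure_singleton _)


/-- For i.i.d. standard Gaussian weights, `T` is uniform on `{0, …, 2^n - 1}`. -/
theorem stmt_3 {n : ℕ} (t : ℕ) (ht : t < 2 ^ n) :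
    (Measure.pi fun _ : Fin n => gaussianReal 0 1) {w | Tcount w = t}
      = ((2 : ENNReal) ^ n)⁻¹ := by
  classical
  set μ := Measure.pi fun _ : Fin n => gaussianReal 0 1 with hμdef
  have hcard : Fintype.card (Fin n → Bool) = 2 ^ n := by simp
  set N : Set (Fin n → ℝ) :=
    ⋃ A, ⋃ B, ⋃ (_ : A ≠ B), {w : Fin n → ℝ | sVal w A = sVal w B} with hN
  have hpairmeas : ∀ A B : Fin n → Bool,
      MeasurableSet {w : Fin n → ℝ | sVal w A = sVal w B} :=
    fun A B => measurableSet_eq_fun (measurable_sVal A) (measurable_sVal B)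
  have hNmeas : MeasurableSet N :=
    MeasurableSet.iUnion fun A => MeasurableSet.iUnion fun B =>
      MeasurableSet.iUnion fun _ => hpairmeas A B
  have hNnull : μ N = 0 :=
    measure_iUnion_null fun A => measure_iUnion_null fun B =>
      measure_iUnion_null fun h => null_pair h
  set G := Nᶜ with hG
  have hGmeas : MeasurableSet G := hNmeas.compl
  have hGinj : ∀ w ∈ G, Function.Injective (sVal w) := by
    intro w hw A B hAB
    by_contra hne
    exact hw (Set.mem_iUnion.2 ⟨A, Set.mem_iUnion.2 ⟨B, Set.mem_iUnion.2 ⟨hne, hAB⟩⟩⟩)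
  have hGfull : μ G = 1 := by
    have h := measure_compl hNmeas (measure_ne_top μ N)
    rw [hG, h, hNnull, measure_univ, tsub_zero]
  set E : (Fin n → Bool) → Set (Fin n → ℝ) := fun S => {w | rank w S = t} with hE
  have hEmeas : ∀ S, MeasurableSet (E S) := fun S =>
    measurable_rank S (measurableSet_singleton t)
  have hTE : {w : Fin n → ℝ | Tcount w = t} = E (fun _ => false) := by
    ext w; simp [hE, Tcount_eq_rank_bot]
  have hTmeas : MeasurableSet {w : Fin n → ℝ | Tcount w = t} := by
    rw [hTE]; exact hEmeas _
  have hES : ∀ S, μ (E S) = μ {w | Tcount w = t} := by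
    intro S
    have hmp := flip_mp S
    have hpre : flipv S ⁻¹' {w : Fin n → ℝ | Tcount w = t} = E S := by
      ext w
      simp only [Set.mem_preimage, Set.mem_setOf_eq, hE, Tcount_flip]
    calc μ (E S) = μ (flipv S ⁻¹' {w | Tcount w = t}) := by rw [hpre]
      _ = μ {w | Tcount w = t} := hmp.measure_preimage hTmeas.nullMeasurableSet
  have hdisj : Set.PairwiseDisjoint (↑(Finset.univ : Finset (Fin n → Bool)))
      (fun S => E S ∩ G) := by
    intro S _ S' _ hSS
    refine Set.disjoint_left.2 fun w hw hw' => ?_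
    exact hSS (rank_injective (hGinj w hw.2) ((hw.1 : rank w S = t).trans
      (hw'.1 : rank w S' = t).symm))
  have hcover : ⋃ S ∈ (Finset.univ : Finset (Fin n → Bool)), (E S ∩ G) = G := by
    apply Set.Subset.antisymm
    · simp only [Set.iUnion_subset_iff]
      intro S _; exact Set.inter_subset_right
    · intro w hw
      obtain ⟨S, hS, _⟩ := exists_unique_rank (f := sVal w) (hGinj w hw) (hcard ▸ ht)
      exact Set.mem_biUnion (Finset.mem_univ S) ⟨hS, hw⟩
  have hsum : ∑ S : Fin n → Bool, μ (E S ∩ G) = 1 := by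
    rw [← measure_biUnion_finset hdisj (fun S _ => (hEmeas S).inter hGmeas), hcover, hGfull]
  have hinter : ∀ S, μ (E S ∩ G) = μ (E S) := fun S =>
    measure_inter_conull (by rw [hG, compl_compl]; exact hNnull)
  rw [Finset.sum_congr rfl (fun S _ => (hinter S).trans (hES S)), Finset.sum_const,
    Finset.card_univ, hcard, nsmul_eq_mul] at hsum
  have hcast : ((2 ^ n : ℕ) : ENNReal) = (2 : ENNReal) ^ n := by push_cast; ring
  rw [hcast] at hsum
  have h2 : ((2 : ENNReal) ^ n) ≠ 0 := pow_ne_zero _ two_ne_zero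
  have h2' : ((2 : ENNReal) ^ n) ≠ ⊤ := ENNReal.pow_ne_top (by norm_num)
  calc μ {w | Tcount w = t}
      = ((2 : ENNReal) ^ n)⁻¹ * ((2 : ENNReal) ^ n * μ {w | Tcount w = t}) := by
        rw [← mul_assoc, ENNReal.inv_mul_cancel h2 h2', one_mul]
    _ = ((2 : ENNReal) ^ n)⁻¹ := by rw [hsum, mul_one]
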